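/- Equivalence of LARS at-window conditions with window-constrained atoms: for any stream S, evaluation time t, window length d, and ground atom p(x), the LARS condition ⊞ᵈ@_{t′} p(x) is satisfied at time t over S if and only if p(x, t′) ∈ S and t − d ≤ t′ ≤ t. Therefore, under the substitution t′ := t − i, the condition is satisfiable only for i ∈ {0, 1, …, d}, and the replacement of a rule containing ⊞ᵈ@_{T′} p(X) by the d+1 rules obtained by mapping T′ ↦ T − i for i = 0,…,d preserves the set of derivable ground head atoms at every time-point. -/
import Mathlib

/-- LARS semantics of the at-window condition: `⊞ᵈ@_{t′} p(x)` holds at evaluation time `t`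
over stream `S` iff `p(x, t′) ∈ S` and `t − d ≤ t′ ≤ t`. -/
def AtWindow {Const : Type} (S : Const → ℤ → Prop) (d : ℕ) (t t' : ℤ) (x : Const) : Prop :=
  S x t' ∧ t - (d : ℤ) ≤ t' ∧ t' ≤ t

/-- Equivalence of LARS at-window conditions with window-constrained atoms: the condition
`⊞ᵈ@_{t′} p(x)` is satisfiable only for `t′ = t − i` with `i ∈ {0, …, d}`, and, for any
remaining rule conditions `C` (depending on `t′`), replacing a rule containing
`⊞ᵈ@_{T′} p(X)` by the `d + 1` rules obtained under the substitutions `T′ ↦ T − i`,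
`i = 0, …, d`, preserves the set of derivable ground head atoms at every time-point. -/
theorem at_window_translation (Const : Type) (S : Const → ℤ → Prop)
    (d : ℕ) (x : Const) (t : ℤ) (C : ℤ → Prop) :
    (∀ t' : ℤ, AtWindow S d t t' x → ∃ i : ℕ, i ≤ d ∧ t' = t - (i : ℤ)) ∧
    ((∃ t' : ℤ, AtWindow S d t t' x ∧ C t') ↔
      (∃ i : ℕ, i ≤ d ∧ S x (t - (i : ℤ)) ∧ C (t - (i : ℤ)))) := by
  have key : ∀ t' : ℤ, AtWindow S d t t' x → ∃ i : ℕ, i ≤ d ∧ t' = t - (i : ℤ) := by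
    intro t' ⟨_, h1, h2⟩
    refine ⟨(t - t').toNat, ?_, ?_⟩
    · omega
    · omega
  refine ⟨key, ?_, ?_⟩
  · rintro ⟨t', hw, hc⟩
    obtain ⟨i, hi, rfl⟩ := key t' hw
    exact ⟨i, hi, hw.1, hc⟩
  · rintro ⟨i, hi, hs, hc⟩
    exact ⟨t - i, ⟨hs, by omega, by omega⟩, hc⟩
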